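/- (Dual Cheeger lower bound) For a finite connected subset Ω of a weighted graph, λ_max(Ω) ≥ 2h̄(Ω) + h(Ω). -/

import Mathlib

open Finset

variable {V : Type*}

noncomputable def deg (μ : V → V → ℝ) (x : V) : ℝ := ∑ᶠ y, μ x y

noncomputable def eSum (μ : V → V → ℝ) (A B : Finset V) : ℝ :=
  ∑ x ∈ A, ∑ y ∈ B, μ x y

noncomputable def vol (μ : V → V → ℝ) (U : Finset V) : ℝ := ∑ x ∈ U, deg μ x

noncomputable def bdry (μ : V → V → ℝ) (U : Finset V) : ℝ := vol μ U - eSum μ U U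

noncomputable def cheeger (μ : V → V → ℝ) (Ω : Finset V) : ℝ :=
  sInf {r : ℝ | ∃ U : Finset V, U.Nonempty ∧ U ⊆ Ω ∧ r = bdry μ U / vol μ U}

noncomputable def dualCheeger (μ : V → V → ℝ) (Ω : Finset V) : ℝ :=
  sSup {r : ℝ | ∃ V₁ V₂ : Finset V, V₁.Nonempty ∧ V₂.Nonempty ∧ Disjoint V₁ V₂ ∧
    V₁ ⊆ Ω ∧ V₂ ⊆ Ω ∧ r = 2 * eSum μ V₁ V₂ / (vol μ V₁ + vol μ V₂)}

noncomputable def dLap (μ : V → V → ℝ) (Ω : Finset V) (f : V → ℝ) (x : V) : ℝ :=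
  f x - (1 / deg μ x) * ∑ y ∈ Ω, μ x y * f y

def IsDirEigfun (μ : V → V → ℝ) (Ω : Finset V) (lam : ℝ) (f : V → ℝ) : Prop :=
  (∃ x ∈ Ω, f x ≠ 0) ∧ (∀ x ∉ Ω, f x = 0) ∧ ∀ x ∈ Ω, dLap μ Ω f x = lam * f x

def IsDirEig (μ : V → V → ℝ) (Ω : Finset V) (lam : ℝ) : Prop :=
  ∃ f : V → ℝ, IsDirEigfun μ Ω lam f

noncomputable def lam1 (μ : V → V → ℝ) (Ω : Finset V) : ℝ :=
  sInf {l : ℝ | IsDirEig μ Ω l}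

noncomputable def lamMax (μ : V → V → ℝ) (Ω : Finset V) : ℝ :=
  sSup {l : ℝ | IsDirEig μ Ω l}

def ConnectedOn (μ : V → V → ℝ) (Ω : Finset V) : Prop :=
  ∀ x ∈ Ω, ∀ y ∈ Ω,
    Relation.ReflTransGen (fun a b => a ∈ Ω ∧ b ∈ Ω ∧ μ a b ≠ 0) x y

def BipartiteOn (μ : V → V → ℝ) (Ω : Finset V) : Prop :=
  ∃ U₁ U₂ : Finset V, Disjoint U₁ U₂ ∧ (U₁ : Set V) ∪ ↑U₂ = ↑Ω ∧
    (∀ x ∈ U₁, ∀ y ∈ U₁, μ x y = 0) ∧ (∀ x ∈ U₂, ∀ y ∈ U₂, μ x y = 0)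

lemma sum_mu_le_deg (μ : V → V → ℝ) (hnn : ∀ x y, 0 ≤ μ x y)
    (hfin : ∀ x : V, (Function.support (μ x)).Finite) (x : V) (Ω : Finset V) :
    ∑ y ∈ Ω, μ x y ≤ deg μ x := by
  classical
  have hdeg : deg μ x = ∑ y ∈ (hfin x).toFinset, μ x y := finsum_eq_sum _ (hfin x)
  have h1 : ∑ y ∈ Ω, μ x y = ∑ y ∈ Ω ∩ (hfin x).toFinset, μ x y := by
    refine (Finset.sum_subset (Finset.inter_subset_left) ?_).symm
    intro y hy hy2
    by_contra h
    exact hy2 (Finset.mem_inter.2 ⟨hy, (hfin x).mem_toFinset.2 h⟩)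
  rw [h1, hdeg]
  exact Finset.sum_le_sum_of_subset_of_nonneg Finset.inter_subset_right
    (fun y _ _ => hnn x y)

lemma eig_le_two (μ : V → V → ℝ) (hnn : ∀ x y, 0 ≤ μ x y)
    (hfin : ∀ x : V, (Function.support (μ x)).Finite) (hdeg : ∀ x : V, 0 < deg μ x)
    (Ω : Finset V) {l : ℝ} (hl : IsDirEig μ Ω l) : l ≤ 2 := by
  classical
  obtain ⟨f, ⟨x₁, hx₁, hfx₁⟩, hzero, heig⟩ := hl
  have hΩne : Ω.Nonempty := ⟨x₁, hx₁⟩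
  obtain ⟨x, hx, hmax⟩ := Ω.exists_max_image (fun y => |f y|) hΩne
  have hfx : 0 < |f x| := lt_of_lt_of_le (abs_pos.2 hfx₁) (hmax x₁ hx₁)
  have hsum : ∑ y ∈ Ω, μ x y ≤ deg μ x := sum_mu_le_deg μ hnn hfin x Ω
  have h1 : l * f x = f x - (1 / deg μ x) * ∑ y ∈ Ω, μ x y * f y := (heig x hx).symm
  have h2 : |∑ y ∈ Ω, μ x y * f y| ≤ deg μ x * |f x| := by
    calc |∑ y ∈ Ω, μ x y * f y| ≤ ∑ y ∈ Ω, |μ x y * f y| := Finset.abs_sum_le_sum_abs _ _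
    _ ≤ ∑ y ∈ Ω, μ x y * |f x| := by
        refine Finset.sum_le_sum fun y hy => ?_
        rw [abs_mul, abs_of_nonneg (hnn x y)]
        exact mul_le_mul_of_nonneg_left (hmax y hy) (hnn x y)
    _ = (∑ y ∈ Ω, μ x y) * |f x| := by rw [Finset.sum_mul]
    _ ≤ deg μ x * |f x| := mul_le_mul_of_nonneg_right hsum (abs_nonneg _)
  have h3 : |l| * |f x| ≤ 2 * |f x| := by
    rw [← abs_mul, h1]
    calc |f x - (1 / deg μ x) * ∑ y ∈ Ω, μ x y * f y|
        ≤ |f x| + |(1 / deg μ x) * ∑ y ∈ Ω, μ x y * f y| := abs_sub _ _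
    _ ≤ |f x| + (1 / deg μ x) * (deg μ x * |f x|) := by
        gcongr
        rw [abs_mul, abs_of_nonneg (div_nonneg zero_le_one (hdeg x).le)]
        exact mul_le_mul_of_nonneg_left h2 (div_nonneg zero_le_one (hdeg x).le)
    _ = 2 * |f x| := by
        have hd := (hdeg x).ne'
        field_simp
        ring
  have : |l| ≤ 2 := le_of_mul_le_mul_right (by linarith [h3]) hfx
  linarith [le_abs_self l]

lemma rayleigh_le_lamMax (μ : V → V → ℝ) (hsymm : ∀ x y, μ x y = μ y x)
    (hnn : ∀ x y, 0 ≤ μ x y)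
    (hfin : ∀ x : V, (Function.support (μ x)).Finite) (hdeg : ∀ x : V, 0 < deg μ x)
    (Ω : Finset V) (F : V → ℝ) (hFne : ∃ x ∈ Ω, F x ≠ 0) :
    (∑ x ∈ Ω, deg μ x * F x ^ 2 - ∑ x ∈ Ω, ∑ y ∈ Ω, μ x y * F x * F y) /
      (∑ x ∈ Ω, deg μ x * F x ^ 2) ≤ lamMax μ Ω := by
  classical
  obtain ⟨x₁, hx₁, hFx₁⟩ := hFne
  haveI : Nonempty ↥Ω := ⟨⟨x₁, hx₁⟩⟩
  set E := EuclideanSpace ℝ ↥Ω with hE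
  haveI : Nontrivial E := by
    refine ⟨0, WithLp.toLp 2 (fun i => (1:ℝ) : ↥Ω → ℝ), fun h => ?_⟩
    have : (0:ℝ) = 1 := by simpa using congrFun (congrArg WithLp.ofLp h) ⟨x₁, hx₁⟩
    exact zero_ne_one this
  -- the symmetrized matrix
  set M : Matrix ↥Ω ↥Ω ℝ := fun i j => (if i = j then (1:ℝ) else 0)
      - μ i j / (Real.sqrt (deg μ i) * Real.sqrt (deg μ j)) with hMdef
  have hMsymm : ∀ i j, M i j = M j i := by
    intro i j
    simp only [hMdef]
    rw [hsymm (i:V) j, mul_comm]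
    congr 1
    by_cases h : i = j <;> simp [h, eq_comm]
  have hherm : M.IsHermitian := by
    rw [Matrix.IsHermitian]
    ext i j
    simpa using (hMsymm j i)
  have hTsym : (Matrix.toEuclideanLin M).IsSymmetric :=
    Matrix.isHermitian_iff_isSymmetric.mp hherm
  set T := Matrix.toEuclideanLin M with hT
  have hTapp : ∀ (v : E) (i : ↥Ω), T v i = ∑ j, M i j * v j := by
    intro v i
    rfl
  have heig := hTsym.hasEigenvalue_iSup_of_finiteDimensional
  set lam : ℝ := ⨆ x : { x : E // x ≠ 0 }, RCLike.re (inner ℝ (T x) (x:E)) / ‖(x : E)‖ ^ 2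
    with hlam
  have heigval : Module.End.HasEigenvalue T lam := by exact heig
  obtain ⟨v, hv⟩ := heigval.exists_hasEigenvector
  have hvne : v ≠ 0 := hv.2
  have hveq : T v = lam • v := Module.End.mem_eigenspace_iff.mp hv.1
  have hsq : ∀ x : V, 0 < Real.sqrt (deg μ x) := fun x => Real.sqrt_pos.2 (hdeg x)
  set f : V → ℝ := fun x => if h : x ∈ Ω then v ⟨x, h⟩ / Real.sqrt (deg μ x) else 0 with hf
  have hfΩ : ∀ (x) (hx : x ∈ Ω), f x = v ⟨x, hx⟩ / Real.sqrt (deg μ x) := by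
    intro x hx; simp [hf, hx]
  have hlamEig : IsDirEig μ Ω lam := by
    refine ⟨f, ?_, ?_, ?_⟩
    · obtain ⟨i, hi⟩ : ∃ i : ↥Ω, v i ≠ 0 := by
        by_contra h
        push_neg at h
        exact hvne (by ext i; simpa using h i)
      refine ⟨i, i.2, ?_⟩
      rw [hfΩ i i.2]
      exact div_ne_zero (by simpa using hi) (hsq i).ne'
    · intro x hx; simp [hf, hx]
    · intro x hx
      have h1 : T v ⟨x, hx⟩ = lam * v ⟨x, hx⟩ := by rw [hveq]; rfl
      rw [hTapp] at h1
      have hkey : v ⟨x, hx⟩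
          - ∑ j : ↥Ω, μ x j / (Real.sqrt (deg μ x) * Real.sqrt (deg μ (j:V))) * v j
          = lam * v ⟨x, hx⟩ := by
        rw [← h1, hMdef]
        simp [sub_mul, Finset.sum_sub_distrib, ite_mul]
      have hS : ∑ y ∈ Ω, μ x y * f y
          = Real.sqrt (deg μ x) *
            ∑ j : ↥Ω, μ x j / (Real.sqrt (deg μ x) * Real.sqrt (deg μ (j:V))) * v j := by
        rw [Finset.mul_sum, ← Finset.sum_coe_sort Ω (fun y => μ x y * f y)]
        refine Finset.sum_congr rfl fun j _ => ?_
        rw [hfΩ j j.2]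
        have h2 := (hsq x).ne'
        have h3 := (hsq (j:V)).ne'
        field_simp
      have hS2 : ∑ j : ↥Ω, μ x j / (Real.sqrt (deg μ x) * Real.sqrt (deg μ (j:V))) * v j
          = v ⟨x, hx⟩ - lam * v ⟨x, hx⟩ := by linarith [hkey]
      have hd : deg μ x = Real.sqrt (deg μ x) * Real.sqrt (deg μ x) :=
        (Real.mul_self_sqrt (hdeg x).le).symm
      rw [dLap, hS, hS2, hfΩ x hx, hd]
      have h2 := (hsq x).ne'
      field_simp
      rw [Real.sqrt_sq (hsq x).le]; ring
  have hbdd : BddAbove {l : ℝ | IsDirEig μ Ω l} := ⟨2, fun l hl => eig_le_two μ hnn hfin hdeg Ω hl⟩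
  have hlam_le : lam ≤ lamMax μ Ω := le_csSup hbdd hlamEig
  -- the test vector
  set g : E := WithLp.toLp 2 (fun i => Real.sqrt (deg μ (i:V)) * F (i:V) : ↥Ω → ℝ) with hg
  have hgne : g ≠ 0 := by
    intro h
    have h0 : Real.sqrt (deg μ x₁) * F x₁ = 0 := congrFun (congrArg WithLp.ofLp h) ⟨x₁, hx₁⟩
    rcases mul_eq_zero.mp h0 with h' | h'
    · exact (hsq x₁).ne' h'
    · exact hFx₁ h'
  have hbddA : BddAbove (Set.range fun x : {x : E // x ≠ 0} =>
      RCLike.re (inner ℝ (T x) (x : E)) / ‖(x : E)‖ ^ 2) := by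
    refine ⟨‖LinearMap.toContinuousLinearMap T‖, ?_⟩
    rintro r ⟨⟨w, hw⟩, rfl⟩
    have hwpos : 0 < ‖w‖ := norm_pos_iff.2 hw
    have h2 : inner ℝ (T w) w ≤ ‖T w‖ * ‖w‖ := real_inner_le_norm _ _
    have h3 : ‖T w‖ ≤ ‖LinearMap.toContinuousLinearMap T‖ * ‖w‖ :=
      (LinearMap.toContinuousLinearMap T).le_opNorm w
    simp only [RCLike.re_to_real]
    rw [div_le_iff₀ (by positivity)]
    calc inner ℝ (T w) w ≤ ‖T w‖ * ‖w‖ := h2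
      _ ≤ (‖LinearMap.toContinuousLinearMap T‖ * ‖w‖) * ‖w‖ := by
          exact mul_le_mul_of_nonneg_right h3 (norm_nonneg w)
      _ = ‖LinearMap.toContinuousLinearMap T‖ * ‖w‖ ^ 2 := by ring
  have hray : RCLike.re (inner ℝ (T g) g) / ‖g‖ ^ 2 ≤ lam := by
    rw [hlam]
    exact le_ciSup hbddA ⟨g, hgne⟩
  have hnum : inner ℝ (T g) g
      = ∑ x ∈ Ω, deg μ x * F x ^ 2 - ∑ x ∈ Ω, ∑ y ∈ Ω, μ x y * F x * F y := by
    rw [PiLp.inner_apply]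
    have hterm : ∀ i : ↥Ω, inner ℝ (T g i) (g i)
        = deg μ (i:V) * F (i:V) ^ 2 - ∑ y ∈ Ω, μ (i:V) y * F (i:V) * F y := by
      intro i
      have hTgi : T g i = Real.sqrt (deg μ (i:V)) * F (i:V)
          - (1 / Real.sqrt (deg μ (i:V))) * ∑ j : ↥Ω, μ (i:V) (j:V) * F (j:V) := by
        rw [hTapp, hMdef]
        simp only [sub_mul, ite_mul, one_mul, zero_mul, Finset.sum_sub_distrib,
          Finset.sum_ite_eq, Finset.mem_univ, if_true]
        have hgj : ∀ j : ↥Ω, g j = Real.sqrt (deg μ (j:V)) * F (j:V) := fun j => rfl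
        rw [hgj, Finset.mul_sum]
        congr 1
        refine Finset.sum_congr rfl fun j _ => ?_
        rw [hgj]
        have h2 := (hsq (i:V)).ne'
        have h3 := (hsq (j:V)).ne'
        field_simp
      have hgi : g i = Real.sqrt (deg μ (i:V)) * F (i:V) := rfl
      have hinner : inner ℝ (T g i) (g i) = T g i * g i := by simp only [RCLike.inner_apply, conj_trivial]; ring
      rw [hinner, hTgi, hgi]
      have hd : Real.sqrt (deg μ (i:V)) * Real.sqrt (deg μ (i:V)) = deg μ (i:V) :=
        Real.mul_self_sqrt (hdeg (i:V)).le
      have h2 := (hsq (i:V)).ne'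
      rw [← Finset.sum_coe_sort Ω (fun y => μ (i:V) y * F (i:V) * F y)]
      rw [sub_mul]
      congr 1
      · rw [show Real.sqrt (deg μ (i:V)) * F (i:V) * (Real.sqrt (deg μ (i:V)) * F (i:V))
            = (Real.sqrt (deg μ (i:V)) * Real.sqrt (deg μ (i:V))) * F (i:V) ^ 2 from by ring, hd]
      · rw [show (1 / Real.sqrt (deg μ (i:V))) * (∑ j : ↥Ω, μ (i:V) (j:V) * F (j:V))
            * (Real.sqrt (deg μ (i:V)) * F (i:V))
            = (∑ j : ↥Ω, μ (i:V) (j:V) * F (j:V)) * F (i:V) from by field_simp]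
        rw [Finset.sum_mul]
        exact Finset.sum_congr rfl fun j _ => by ring
    calc ∑ i : ↥Ω, inner ℝ (T g i) (g i)
        = ∑ i : ↥Ω, (deg μ (i:V) * F (i:V) ^ 2 - ∑ y ∈ Ω, μ (i:V) y * F (i:V) * F y) :=
          Finset.sum_congr rfl fun i _ => hterm i
      _ = ∑ x ∈ Ω, deg μ x * F x ^ 2 - ∑ x ∈ Ω, ∑ y ∈ Ω, μ x y * F x * F y := by
          rw [Finset.sum_sub_distrib, Finset.sum_coe_sort Ω (fun x => deg μ x * F x ^ 2),
            Finset.sum_coe_sort Ω (fun x => ∑ y ∈ Ω, μ x y * F x * F y)]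
  have hden : ‖g‖ ^ 2 = ∑ x ∈ Ω, deg μ x * F x ^ 2 := by
    rw [← real_inner_self_eq_norm_sq, PiLp.inner_apply]
    have hterm : ∀ i : ↥Ω, inner ℝ (g i) (g i) = deg μ (i:V) * F (i:V) ^ 2 := by
      intro i
      have hgi : g i = Real.sqrt (deg μ (i:V)) * F (i:V) := rfl
      have hinner : inner ℝ (g i) (g i) = g i * g i := by simp only [RCLike.inner_apply, conj_trivial]
      rw [hinner, hgi, show Real.sqrt (deg μ (i:V)) * F (i:V) * (Real.sqrt (deg μ (i:V)) * F (i:V))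
          = (Real.sqrt (deg μ (i:V)) * Real.sqrt (deg μ (i:V))) * F (i:V) ^ 2 from by ring,
        Real.mul_self_sqrt (hdeg (i:V)).le]
    rw [Finset.sum_congr rfl fun i _ => hterm i,
      Finset.sum_coe_sort Ω (fun x => deg μ x * F x ^ 2)]
  calc (∑ x ∈ Ω, deg μ x * F x ^ 2 - ∑ x ∈ Ω, ∑ y ∈ Ω, μ x y * F x * F y) /
        (∑ x ∈ Ω, deg μ x * F x ^ 2)
      = RCLike.re (inner ℝ (T g) g) / ‖g‖ ^ 2 := by
        rw [RCLike.re_to_real, hnum, hden]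
    _ ≤ lam := hray
    _ ≤ lamMax μ Ω := hlam_le
  

theorem stmt10 {V : Type*} [Infinite V] (μ : V → V → ℝ) (hsymm : ∀ x y, μ x y = μ y x) (hnn : ∀ x y, 0 ≤ μ x y)
    (hfin : ∀ x : V, (Function.support (μ x)).Finite) (hdeg : ∀ x : V, 0 < deg μ x)
    (hconnG : ∀ x y : V, Relation.ReflTransGen (fun a b => μ a b ≠ 0) x y)
    (Ω : Finset V) (hconn : ConnectedOn μ Ω) (hcard : 2 ≤ Ω.card) :
    2 * dualCheeger μ Ω + cheeger μ Ω ≤ lamMax μ Ω := by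
  classical
  obtain ⟨a, ha, b, hb, hab⟩ := Finset.one_lt_card.mp hcard
  -- the dual Cheeger set
  set D : Set ℝ := {r : ℝ | ∃ V₁ V₂ : Finset V, V₁.Nonempty ∧ V₂.Nonempty ∧ Disjoint V₁ V₂ ∧
    V₁ ⊆ Ω ∧ V₂ ⊆ Ω ∧ r = 2 * eSum μ V₁ V₂ / (vol μ V₁ + vol μ V₂)} with hD
  have hDne : D.Nonempty := by
    refine ⟨2 * eSum μ {a} {b} / (vol μ {a} + vol μ {b}), {a}, {b}, ?_, ?_, ?_, ?_, ?_, rfl⟩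
    · exact Finset.singleton_nonempty a
    · exact Finset.singleton_nonempty b
    · simp only [Finset.disjoint_singleton]; exact hab
    · simpa using ha
    · simpa using hb
  have hDfin : D.Finite := by
    have hsub : D ⊆ ↑((Ω.powerset ×ˢ Ω.powerset).image
        (fun p : Finset V × Finset V => 2 * eSum μ p.1 p.2 / (vol μ p.1 + vol μ p.2))) := by
      rintro r ⟨V₁, V₂, _, _, _, h₁, h₂, rfl⟩
      simp only [Finset.coe_image, Set.mem_image, Finset.mem_coe, Finset.mem_product]
      exact ⟨(V₁, V₂), by simp [Finset.mem_product, Finset.mem_powerset, h₁, h₂]⟩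
    exact Set.Finite.subset (Finset.finite_toSet _) hsub
  have hDmem : sSup D ∈ D := Set.Nonempty.csSup_mem hDne hDfin
  obtain ⟨V₁, V₂, hV₁ne, hV₂ne, hdisj, hV₁Ω, hV₂Ω, hval⟩ := hDmem
  set U : Finset V := V₁ ∪ V₂ with hU
  have hUΩ : U ⊆ Ω := Finset.union_subset hV₁Ω hV₂Ω
  have hUne : U.Nonempty := hV₁ne.mono Finset.subset_union_left
  -- boundaries are nonneg, the cheeger set is bounded below
  have hbnonneg : ∀ W : Finset V, 0 ≤ bdry μ W := by
    intro W
    have : eSum μ W W ≤ vol μ W := by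
      refine Finset.sum_le_sum fun x _ => ?_
      exact sum_mu_le_deg μ hnn hfin x W
    simpa [bdry, sub_nonneg] using this
  set C : Set ℝ := {r : ℝ | ∃ W : Finset V, W.Nonempty ∧ W ⊆ Ω ∧ r = bdry μ W / vol μ W} with hC
  have hCbdd : BddBelow C := by
    refine ⟨0, ?_⟩
    rintro r ⟨W, hWne, hWΩ, rfl⟩
    have hv : 0 < vol μ W := Finset.sum_pos (fun x _ => hdeg x) hWne
    exact div_nonneg (hbnonneg W) hv.le
  have hCle : sInf C ≤ bdry μ U / vol μ U := csInf_le hCbdd ⟨U, hUne, hUΩ, rfl⟩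
  -- the test function
  set F : V → ℝ := fun x => if x ∈ V₁ then 1 else if x ∈ V₂ then -1 else 0 with hF
  obtain ⟨x₁, hx₁⟩ := hV₁ne
  have hFx₁ : F x₁ ≠ 0 := by simp [hF, hx₁]
  have hFzero : ∀ x, x ∉ U → F x = 0 := by
    intro x hx
    rw [Finset.mem_union] at hx
    push_neg at hx
    simp [hF, hx.1, hx.2]
  have hF1 : ∀ x ∈ V₁, F x = 1 := fun x hx => by simp [hF, hx]
  have hF2 : ∀ x ∈ V₂, F x = -1 := by
    intro x hx
    have : x ∉ V₁ := Finset.disjoint_right.mp hdisj hx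
    simp [hF, this, hx]
  have hray := rayleigh_le_lamMax μ hsymm hnn hfin hdeg Ω F ⟨x₁, hV₁Ω hx₁, hFx₁⟩
  -- compute the sums
  have hS1 : ∑ x ∈ Ω, deg μ x * F x ^ 2 = vol μ U := by
    rw [vol, ← Finset.sum_subset hUΩ (fun x _ hx => by rw [hFzero x hx]; ring)]
    refine Finset.sum_congr rfl fun x hx => ?_
    rcases Finset.mem_union.mp hx with h | h
    · rw [hF1 x h]; ring
    · rw [hF2 x h]; ring
  have he21 : eSum μ V₂ V₁ = eSum μ V₁ V₂ := by
    rw [eSum, eSum, Finset.sum_comm]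
    exact Finset.sum_congr rfl fun x _ => Finset.sum_congr rfl fun y _ => hsymm y x
  have hS2 : ∑ x ∈ Ω, ∑ y ∈ Ω, μ x y * F x * F y
      = eSum μ V₁ V₁ + eSum μ V₂ V₂ - 2 * eSum μ V₁ V₂ := by
    have hrow : ∀ x, ∑ y ∈ Ω, μ x y * F x * F y
        = ∑ y ∈ U, μ x y * F x * F y := by
      intro x
      refine (Finset.sum_subset hUΩ (fun y _ hy => by rw [hFzero y hy]; ring)).symm
    have houter : ∑ x ∈ Ω, ∑ y ∈ Ω, μ x y * F x * F y
        = ∑ x ∈ U, ∑ y ∈ U, μ x y * F x * F y := by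
      rw [← Finset.sum_subset hUΩ (fun x _ hx => ?_)]
      · exact Finset.sum_congr rfl fun x _ => hrow x
      · exact Finset.sum_eq_zero fun y _ => by rw [hFzero x hx]; ring
    rw [houter, hU, Finset.sum_union hdisj]
    have hin : ∀ x, ∑ y ∈ V₁ ∪ V₂, μ x y * F x * F y
        = (∑ y ∈ V₁, μ x y * F x * F y) + ∑ y ∈ V₂, μ x y * F x * F y :=
      fun x => Finset.sum_union hdisj
    rw [Finset.sum_congr rfl fun x _ => hin x, Finset.sum_congr rfl fun x _ => hin x]
    rw [Finset.sum_add_distrib, Finset.sum_add_distrib]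
    have t11 : ∑ x ∈ V₁, ∑ y ∈ V₁, μ x y * F x * F y = eSum μ V₁ V₁ := by
      refine Finset.sum_congr rfl fun x hx => Finset.sum_congr rfl fun y hy => ?_
      rw [hF1 x hx, hF1 y hy]; ring
    have t12 : ∑ x ∈ V₁, ∑ y ∈ V₂, μ x y * F x * F y = -eSum μ V₁ V₂ := by
      rw [eSum, ← Finset.sum_neg_distrib]
      refine Finset.sum_congr rfl fun x hx => ?_
      rw [← Finset.sum_neg_distrib]
      refine Finset.sum_congr rfl fun y hy => ?_
      rw [hF1 x hx, hF2 y hy]; ring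
    have t21 : ∑ x ∈ V₂, ∑ y ∈ V₁, μ x y * F x * F y = -eSum μ V₁ V₂ := by
      rw [← he21, eSum, ← Finset.sum_neg_distrib]
      refine Finset.sum_congr rfl fun x hx => ?_
      rw [← Finset.sum_neg_distrib]
      refine Finset.sum_congr rfl fun y hy => ?_
      rw [hF2 x hx, hF1 y hy]; ring
    have t22 : ∑ x ∈ V₂, ∑ y ∈ V₂, μ x y * F x * F y = eSum μ V₂ V₂ := by
      refine Finset.sum_congr rfl fun x hx => Finset.sum_congr rfl fun y hy => ?_
      rw [hF2 x hx, hF2 y hy]; ring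
    rw [t11, t12, t21, t22]; ring
  have hvolU : vol μ U = vol μ V₁ + vol μ V₂ := Finset.sum_union hdisj
  have hvolUpos : 0 < vol μ U := Finset.sum_pos (fun x _ => hdeg x) hUne
  have heUU : eSum μ U U = eSum μ V₁ V₁ + eSum μ V₂ V₂ + 2 * eSum μ V₁ V₂ := by
    rw [eSum, hU, Finset.sum_union hdisj]
    have hin : ∀ x, ∑ y ∈ V₁ ∪ V₂, μ x y
        = (∑ y ∈ V₁, μ x y) + ∑ y ∈ V₂, μ x y := fun x => Finset.sum_union hdisj
    rw [Finset.sum_congr rfl fun x _ => hin x, Finset.sum_congr rfl fun x _ => hin x,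
      Finset.sum_add_distrib, Finset.sum_add_distrib]
    have h := he21
    simp only [eSum] at h ⊢
    linarith [h]
  -- final arithmetic
  rw [dualCheeger, ← hD, cheeger, ← hC, hval]
  have key : 2 * (2 * eSum μ V₁ V₂ / (vol μ V₁ + vol μ V₂)) + bdry μ U / vol μ U
      = (∑ x ∈ Ω, deg μ x * F x ^ 2 - ∑ x ∈ Ω, ∑ y ∈ Ω, μ x y * F x * F y) /
        (∑ x ∈ Ω, deg μ x * F x ^ 2) := by
    rw [hS1, hS2, bdry, heUU, ← hvolU]
    field_simp
    ring
  calc 2 * (2 * eSum μ V₁ V₂ / (vol μ V₁ + vol μ V₂)) + sInf C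
      ≤ 2 * (2 * eSum μ V₁ V₂ / (vol μ V₁ + vol μ V₂)) + bdry μ U / vol μ U := by linarith
    _ = _ := key
    _ ≤ lamMax μ Ω := hray
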